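/- Let K be a subfield of ℂ not containing a primitive q-th root of unity ε (q prime), and suppose X^q − a (a ∈ K, a ≠ 0) is reducible over K. Then the splitting field of X^q − a over K equals K(ε), which is also the splitting field of X^q − 1 over K. -/

import Mathlib

open Polynomial IntermediateField

set_option synthInstance.maxHeartbeats 1000000
set_option maxHeartbeats 2000000

/-- Let `K ⊆ ℂ` not contain a primitive `q`-th root of unity `ε` (`q` prime), and
suppose `X^q - a` (`a ∈ K`, `a ≠ 0`) is reducible over `K`. Then the splitting field of
`X^q - a` over `K` equals `K(ε)`, which is also the splitting field of `X^q - 1`. -/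
theorem splitting_field_reducible_binomial (K : Subfield ℂ) (q : ℕ) (hq : q.Prime)
    (a : K) (ha : a ≠ 0) (ε : ℂ) (hε : IsPrimitiveRoot ε q) (hεK : ε ∉ K)
    (hred : ¬ Irreducible (X ^ q - C a : K[X])) :
    adjoin K ((X ^ q - C a : K[X]).rootSet ℂ) = adjoin K {ε} ∧
    adjoin K ((X ^ q - C 1 : K[X]).rootSet ℂ) = adjoin K {ε} := by
  haveI : NeZero q := ⟨hq.ne_zero⟩
  obtain ⟨b, hb⟩ : ∃ b : K, b ^ q = a := by
    by_contra h
    push_neg at h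
    exact hred ((X_pow_sub_C_irreducible_iff_of_prime hq).mpr h)
  have hb0 : b ≠ 0 := by
    rintro rfl
    exact ha (by rw [← hb, zero_pow hq.ne_zero])
  have hbC : (b : ℂ) ≠ 0 := by exact_mod_cast hb0
  have hεq : ε ^ q = 1 := hε.pow_eq_one
  have key : ∀ (c : K), (c : ℂ) ≠ 0 →
      adjoin K ((X ^ q - C (c ^ q) : K[X]).rootSet ℂ) = adjoin K {ε} := by
    intro c hc
    have hne : (X ^ q - C (c ^ q) : K[X]) ≠ 0 := X_pow_sub_C_ne_zero hq.pos _
    apply le_antisymm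
    · rw [adjoin_le_iff]
      intro x hx
      rw [mem_rootSet] at hx
      have hxq : x ^ q = (c : ℂ) ^ q := by
        have := hx.2
        simp only [map_sub, map_pow, aeval_X, aeval_C, sub_eq_zero] at this
        exact (by simpa using this : x ^ q = (algebraMap K ℂ) c ^ q)
      have hpow : (x / c) ^ q = 1 := by
        rw [div_pow, hxq, div_self (pow_ne_zero _ hc)]
      obtain ⟨i, _, hi⟩ := hε.eq_pow_of_pow_eq_one hpow
      have hx' : x = (c : ℂ) * ε ^ i := by
        field_simp at hi
        rw [← hi]; ring
      rw [hx', SetLike.mem_coe]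
      apply mul_mem
      · exact IntermediateField.algebraMap_mem _ c
      · have h : ε ∈ adjoin K {ε} := subset_adjoin K {ε} (Set.mem_singleton ε)
        exact pow_mem h i
    · rw [adjoin_le_iff, Set.singleton_subset_iff, SetLike.mem_coe]
      have hroot : (c : ℂ) * ε ∈ (X ^ q - C (c ^ q) : K[X]).rootSet ℂ := by
        rw [mem_rootSet]
        refine ⟨hne, ?_⟩
        simp only [map_sub, map_pow, aeval_X, aeval_C]
        push_cast
        rw [mul_pow, hεq, mul_one, sub_eq_zero]; rfl
      have : ε = (c : ℂ)⁻¹ * ((c : ℂ) * ε) := by field_simp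
      rw [this]
      apply mul_mem
      · exact inv_mem (IntermediateField.algebraMap_mem _ c)
      · exact subset_adjoin K _ hroot
  constructor
  · rw [← hb]; exact key b hbC
  · have h1 : (1 : K) = 1 ^ q := (one_pow q).symm
    rw [show (C (1 : K)) = C ((1 : K) ^ q) by rw [one_pow]]
    exact key 1 (by norm_num)
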